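/- Let K be a compact Hausdorff space and d a lower semicontinuous metric on K. Then (a) the topology generated on K by the metric d is finer than the original topology of K, and (b) the metric space (K, d) is complete. -/

import Mathlib

open Filter Set Topology

/-- Let `K` be a compact Hausdorff space and `d` a lower semicontinuous
metric on `K`. Then (a) the topology generated by `d` is finer than the topology of `K`
(every open set of `K` contains a `d`-ball around each of its points), and
(b) `(K, d)` is complete (every `d`-Cauchy sequence `d`-converges). -/
theorem lsc_metric_finer_and_complete
    {K : Type*} [TopologicalSpace K] [CompactSpace K] [T2Space K]
    (d : K → K → ℝ)
    (hd_nonneg : ∀ x y, 0 ≤ d x y)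
    (hd_symm : ∀ x y, d x y = d y x)
    (hd_eq : ∀ x y, d x y = 0 ↔ x = y)
    (hd_tri : ∀ x y z, d x z ≤ d x y + d y z)
    (hd_lsc : LowerSemicontinuous fun p : K × K => d p.1 p.2) :
    (∀ U : Set K, IsOpen U → ∀ x ∈ U, ∃ ε > 0, {y : K | d x y < ε} ⊆ U) ∧
    (∀ u : ℕ → K, (∀ ε > 0, ∃ N : ℕ, ∀ m ≥ N, ∀ n ≥ N, d (u m) (u n) < ε) →
      ∃ x : K, ∀ ε > 0, ∃ N : ℕ, ∀ n ≥ N, d x (u n) < ε) := by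
  -- `y ↦ d x y` is lower semicontinuous for each fixed `x`
  have hlsc1 : ∀ x : K, LowerSemicontinuous fun y : K => d x y := by
    intro x
    exact hd_lsc.comp (Continuous.prodMk_right x)
  have hpos : ∀ x y : K, x ≠ y → 0 < d x y := by
    intro x y hxy
    rcases lt_or_eq_of_le (hd_nonneg x y) with h | h
    · exact h
    · exact absurd ((hd_eq x y).1 h.symm) hxy
  constructor
  · -- part (a)
    intro U hU x hx
    by_cases hUc : Uᶜ = ∅
    · exact ⟨1, one_pos, fun y _ => by
        have : y ∉ Uᶜ := by simp [hUc]
        simpa using this⟩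
    · obtain ⟨y₀, hy₀⟩ := Set.nonempty_iff_ne_empty.2 hUc
      have hcomp : IsCompact (Uᶜ) := (hU.isClosed_compl).isCompact
      -- cover `Uᶜ` by the open sets `{y | d x y > d x z / 2}` for `z ∈ Uᶜ`
      obtain ⟨t, ht⟩ := hcomp.elim_finite_subcover
        (fun z : ↥(Uᶜ) => {y : K | d x (z : K) / 2 < d x y})
        (fun z => (hlsc1 x).isOpen_preimage _)
        (fun z hz => by
          refine mem_iUnion.2 ⟨⟨z, hz⟩, ?_⟩
          have hzx : x ≠ z := fun h => hz (h ▸ hx)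
          have := hpos x z hzx
          simpa using by linarith)
      -- `t` is nonempty since `Uᶜ` is nonempty
      have hty₀ := ht hy₀
      rw [mem_iUnion₂] at hty₀
      obtain ⟨z₀, hz₀t, _⟩ := hty₀
      have htne : t.Nonempty := ⟨z₀, hz₀t⟩
      obtain ⟨ε, hεmem, hεmin⟩ := t.exists_min_image (fun z => d x (z : K) / 2) htne
      refine ⟨d x (ε : K) / 2, by
        have hεx : x ≠ (ε : K) := fun h => ε.2 (h ▸ hx)
        have := hpos x ε hεx; linarith, ?_⟩
      intro y hy
      by_contra hyU
      have hyc := ht hyU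
      rw [mem_iUnion₂] at hyc
      obtain ⟨z, hzt, hzy⟩ := hyc
      have := hεmin z hzt
      simp only [mem_setOf_eq] at hzy hy
      linarith
  · -- part (b)
    intro u hu
    haveI : (Filter.map u atTop).NeBot := map_neBot
    obtain ⟨x, hx⟩ := exists_clusterPt_of_compactSpace (Filter.map u atTop)
    refine ⟨x, ?_⟩
    intro ε hε
    obtain ⟨N, hN⟩ := hu (ε / 2) (by linarith)
    refine ⟨N, fun n hn => ?_⟩
    by_contra h
    push_neg at h
    have hgt : ε / 2 < d x (u n) := by linarith
    -- `{y | ε/2 < d y (u n)}` is open and contains `x`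
    have hopen : IsOpen {y : K | ε / 2 < d y (u n)} :=
      (hd_lsc.comp (continuous_id.prodMk continuous_const)).isOpen_preimage (ε / 2)
    have hmem : {y : K | ε / 2 < d y (u n)} ∈ 𝓝 x := hopen.mem_nhds hgt
    have hV : u '' Set.Ici N ∈ Filter.map u atTop := image_mem_map (Ici_mem_atTop N)
    obtain ⟨y, hy1, hy2⟩ := clusterPt_iff_nonempty.1 hx hmem hV
    obtain ⟨m, hm, rfl⟩ := hy2
    have := hN m hm n hn
    simp only [mem_setOf_eq] at hy1
    linarith
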